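/- Let O ⊆ ℝ^d be an open set whose boundary ∂O is porous. Then there exists t ∈ (0,1) such that O is of class D^t, i.e. sup over x ∈ ∂O and 0 < r ≤ 1 of r^{t−d} · ∫_{B(x,r) \ ∂O} dist(y, ∂O)^{−t} dy is finite. -/

import Mathlib

open MeasureTheory Metric

set_option maxHeartbeats 1000000
open MeasureTheory Metric Set

namespace Porous

/-! ### Dyadic cube infrastructure -/

def cube (d n : ℕ) (c : Fin d → ℤ) : Set (EuclideanSpace ℝ (Fin d)) :=
  {y | ∀ i, (c i : ℝ) ≤ 2 ^ n * y i ∧ 2 ^ n * y i < c i + 1}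

noncomputable def idx (d n : ℕ) (y : EuclideanSpace ℝ (Fin d)) : Fin d → ℤ :=
  fun i => ⌊2 ^ n * y i⌋

lemma mem_cube_iff {d n : ℕ} {c : Fin d → ℤ} {y : EuclideanSpace ℝ (Fin d)} :
    y ∈ cube d n c ↔ idx d n y = c := by
  constructor
  · intro h; funext i
    exact Int.floor_eq_iff.2 ⟨(h i).1, (h i).2⟩
  · rintro rfl i
    exact ⟨Int.floor_le _, Int.lt_floor_add_one _⟩

lemma mem_cube_idx {d n : ℕ} (y : EuclideanSpace ℝ (Fin d)) : y ∈ cube d n (idx d n y) :=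
  mem_cube_iff.2 rfl

lemma cube_disjoint {d n : ℕ} {c c' : Fin d → ℤ} (h : c ≠ c') :
    Disjoint (cube d n c) (cube d n c') := by
  rw [Set.disjoint_left]
  intro y hy hy'
  exact h ((mem_cube_iff.1 hy).symm.trans (mem_cube_iff.1 hy'))

lemma cube_eq_preimage (d n : ℕ) (c : Fin d → ℤ) :
    cube d n c = (MeasurableEquiv.toLp 2 (Fin d → ℝ)).symm ⁻¹'
      (Set.univ.pi fun i => Set.Ico ((c i : ℝ) / 2 ^ n) ((c i + 1) / 2 ^ n)) := by
  ext y
  simp only [cube, Set.mem_preimage, Set.mem_pi, Set.mem_univ, forall_true_left, Set.mem_Ico,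
    Set.mem_setOf_eq]
  have he : ∀ i, (MeasurableEquiv.toLp 2 (Fin d → ℝ)).symm y i = y i := fun _ => rfl
  simp only [he]
  have h2 : (0:ℝ) < 2 ^ n := by positivity
  constructor
  · intro h i
    have := h i
    constructor
    · rw [div_le_iff₀ h2]; linarith [this.1]
    · rw [lt_div_iff₀ h2]; linarith [this.2]
  · intro h i
    have := h i
    constructor
    · have := (div_le_iff₀ h2).1 (h i).1; linarith
    · have := (lt_div_iff₀ h2).1 (h i).2; linarith

lemma measurableSet_cube (d n : ℕ) (c : Fin d → ℤ) : MeasurableSet (cube d n c) := by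
  rw [cube_eq_preimage]
  exact (MeasurableEquiv.toLp 2 (Fin d → ℝ)).symm.measurable
    (MeasurableSet.univ_pi fun i => measurableSet_Ico)

lemma volume_cube (d n : ℕ) (c : Fin d → ℤ) :
    volume (cube d n c) = (ENNReal.ofReal (((2:ℝ) ^ n)⁻¹)) ^ d := by
  rw [cube_eq_preimage,
    (EuclideanSpace.volume_preserving_symm_measurableEquiv_toLp (Fin d)).measure_preimage
      ((MeasurableSet.univ_pi fun i => measurableSet_Ico).nullMeasurableSet),
    volume_pi_pi]
  have h2 : (0:ℝ) < 2 ^ n := by positivity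
  have : ∀ i : Fin d, volume (Set.Ico ((c i : ℝ) / 2 ^ n) ((c i + 1) / 2 ^ n))
      = ENNReal.ofReal (((2:ℝ) ^ n)⁻¹) := by
    intro i
    rw [Real.volume_Ico]
    congr 1
    field_simp
    ring
  simp [this, Finset.prod_const]

lemma coord_dist_le {d : ℕ} (y x : EuclideanSpace ℝ (Fin d)) (i : Fin d) :
    dist (y i) (x i) ≤ dist y x := by
  rw [EuclideanSpace.dist_eq]
  have h1 : dist (y i) (x i) ^ 2 ≤ ∑ j, dist (y j) (x j) ^ 2 :=
    Finset.single_le_sum (f := fun j => dist (y j) (x j) ^ 2)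
      (fun j _ => by positivity) (Finset.mem_univ i)
  calc dist (y i) (x i) = Real.sqrt (dist (y i) (x i) ^ 2) := by
        rw [Real.sqrt_sq dist_nonneg]
    _ ≤ _ := Real.sqrt_le_sqrt h1

lemma dist_le_sqrt_mul {d : ℕ} {y x : EuclideanSpace ℝ (Fin d)} {a : ℝ} (ha : 0 ≤ a)
    (h : ∀ i, dist (y i) (x i) ≤ a) : dist y x ≤ Real.sqrt d * a := by
  rw [EuclideanSpace.dist_eq]
  have h1 : ∑ j, dist (y j) (x j) ^ 2 ≤ (d : ℝ) * a ^ 2 := by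
    calc ∑ j, dist (y j) (x j) ^ 2 ≤ ∑ _j : Fin d, a ^ 2 :=
          Finset.sum_le_sum fun j _ => pow_le_pow_left₀ dist_nonneg (h j) 2
      _ = (d : ℝ) * a ^ 2 := by simp [Finset.sum_const, mul_comm]
  calc Real.sqrt (∑ j, dist (y j) (x j) ^ 2) ≤ Real.sqrt ((d:ℝ) * a ^ 2) :=
        Real.sqrt_le_sqrt h1
    _ = Real.sqrt d * a := by
        rw [Real.sqrt_mul (Nat.cast_nonneg d), Real.sqrt_sq ha]

lemma dist_le_of_mem_cube {d n : ℕ} {c : Fin d → ℤ} {y y' : EuclideanSpace ℝ (Fin d)}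
    (hy : y ∈ cube d n c) (hy' : y' ∈ cube d n c) :
    dist y y' ≤ Real.sqrt d * ((2:ℝ) ^ n)⁻¹ := by
  have h2n : (0:ℝ) < 2 ^ n := by positivity
  apply dist_le_sqrt_mul (by positivity)
  intro i
  rw [Real.dist_eq, abs_le]
  have h1 := (hy i).1; have h2 := (hy i).2
  have h3 := (hy' i).1; have h4 := (hy' i).2
  have hinv : (2:ℝ) ^ n * ((2:ℝ) ^ n)⁻¹ = 1 := mul_inv_cancel₀ h2n.ne'
  constructor
  · rw [neg_le, neg_sub, ← mul_le_mul_iff_right₀ h2n, mul_sub, hinv]; nlinarith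
  · rw [← mul_le_mul_iff_right₀ h2n, mul_sub, hinv]; nlinarith

lemma idx_coarse {d n m : ℕ} {y y' : EuclideanSpace ℝ (Fin d)}
    (h : idx d (n + m) y' = idx d (n + m) y) : idx d n y' = idx d n y := by
  funext i
  have h2m : (0:ℝ) < 2 ^ m := by positivity
  have hkey : ∀ z : EuclideanSpace ℝ (Fin d), (2:ℝ) ^ (n + m) * z i = (2 ^ n * z i) * 2 ^ m := by
    intro z; rw [pow_add]; ring
  set C : ℤ := ⌊(2:ℝ) ^ (n + m) * y i⌋ with hC
  have hC' : ⌊(2:ℝ) ^ (n + m) * y' i⌋ = C := congrFun h i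
  set a : ℤ := ⌊(2:ℝ) ^ n * y i⌋ with ha
  show ⌊(2:ℝ) ^ n * y' i⌋ = a
  have h1 : (a : ℝ) * 2 ^ m ≤ 2 ^ (n + m) * y i := by
    rw [hkey]
    exact mul_le_mul_of_nonneg_right (Int.floor_le _) h2m.le
  have h1' : a * (2 ^ m : ℤ) ≤ C := by
    apply Int.le_floor.2; push_cast; exact h1
  have h2 : (2:ℝ) ^ (n + m) * y i < (a + 1 : ℝ) * 2 ^ m := by
    rw [hkey]
    exact mul_lt_mul_of_pos_right (Int.lt_floor_add_one _) h2m
  have h2' : C < (a + 1) * (2 ^ m : ℤ) := by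
    apply Int.floor_lt.2; push_cast; exact h2
  apply Int.floor_eq_iff.2
  constructor
  · have : (a : ℝ) * 2 ^ m ≤ 2 ^ (n + m) * y' i := by
      calc (a:ℝ) * 2 ^ m = ((a * 2 ^ m : ℤ) : ℝ) := by push_cast; ring
        _ ≤ (C : ℝ) := by exact_mod_cast h1'
        _ ≤ 2 ^ (n + m) * y' i := by rw [← hC']; exact Int.floor_le _
    rw [hkey] at this
    exact le_of_mul_le_mul_right this h2m
  · have hC1 : (2:ℝ) ^ (n + m) * y' i < ((C + 1 : ℤ) : ℝ) := by
      rw [← hC']; push_cast; exact Int.lt_floor_add_one _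
    have hfin : (2:ℝ) ^ (n + m) * y' i < (a + 1 : ℝ) * 2 ^ m := by
      refine hC1.trans_le ?_
      have h3 : (C + 1 : ℤ) ≤ (a + 1) * 2 ^ m := h2'
      calc ((C + 1 : ℤ) : ℝ) ≤ (((a + 1) * 2 ^ m : ℤ) : ℝ) := by exact_mod_cast h3
        _ = (a + 1 : ℝ) * 2 ^ m := by push_cast; ring
    rw [hkey] at hfin
    exact lt_of_mul_lt_mul_right hfin h2m.le

lemma cube_subset_coarse {d n m : ℕ} (y : EuclideanSpace ℝ (Fin d)) :
    cube d (n + m) (idx d (n + m) y) ⊆ cube d n (idx d n y) := by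
  intro w hw
  have := idx_coarse (mem_cube_iff.1 hw)
  exact mem_cube_iff.2 this

lemma finite_cubes_meeting_ball (d n : ℕ) (x : EuclideanSpace ℝ (Fin d)) (ρ : ℝ) :
    {c : Fin d → ℤ | (cube d n c ∩ ball x ρ).Nonempty}.Finite := by
  apply Set.Finite.subset (Set.Finite.pi (fun i : Fin d =>
    Set.finite_Icc (⌊(2:ℝ) ^ n * (x i - ρ)⌋) (⌊(2:ℝ) ^ n * (x i + ρ)⌋)))
  rintro c ⟨y, hyc, hyb⟩
  have h2n : (0:ℝ) < 2 ^ n := by positivity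
  simp only [Set.mem_pi, Set.mem_univ, forall_true_left, Set.mem_Icc]
  intro i
  have hco : |y i - x i| ≤ ρ := by
    rw [← Real.dist_eq]
    exact (coord_dist_le y x i).trans (le_of_lt hyb)
  rw [abs_le] at hco
  constructor
  · have hlo : (2:ℝ) ^ n * (x i - ρ) ≤ 2 ^ n * y i :=
      mul_le_mul_of_nonneg_left (by linarith [hco.1]) h2n.le
    have h1 : (⌊(2:ℝ) ^ n * (x i - ρ)⌋ : ℝ) ≤ 2 ^ n * y i := (Int.floor_le _).trans hlo
    have h2 : (⌊(2:ℝ) ^ n * (x i - ρ)⌋ : ℝ) < (c i : ℝ) + 1 := h1.trans_lt (hyc i).2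
    have h3 : (⌊(2:ℝ) ^ n * (x i - ρ)⌋ : ℝ) < ((c i + 1 : ℤ) : ℝ) := by push_cast; exact h2
    exact Int.lt_add_one_iff.1 (by exact_mod_cast h3)
  · apply Int.le_floor.2
    calc (c i : ℝ) ≤ 2 ^ n * y i := (hyc i).1
      _ ≤ 2 ^ n * (x i + ρ) := mul_le_mul_of_nonneg_left (by linarith [hco.2]) h2n.le

lemma volume_ball_le {d : ℕ} (x : EuclideanSpace ℝ (Fin d)) (ρ : ℝ) :
    volume (ball x ρ) ≤ ENNReal.ofReal ((2 * ρ) ^ d) := by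
  rcases le_or_gt ρ 0 with h | h
  · rw [ball_eq_empty.2 h]; simp
  have hsub : ball x ρ ⊆ (MeasurableEquiv.toLp 2 (Fin d → ℝ)).symm ⁻¹'
      (Set.univ.pi fun i => Set.Ioo (x i - ρ) (x i + ρ)) := by
    intro y hy
    simp only [Set.mem_preimage, Set.mem_pi, Set.mem_univ, forall_true_left, Set.mem_Ioo]
    intro i
    have he : (MeasurableEquiv.toLp 2 (Fin d → ℝ)).symm y i = y i := rfl
    rw [he]
    have := (coord_dist_le y x i).trans_lt (mem_ball.1 hy)
    rw [Real.dist_eq, abs_lt] at this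
    constructor <;> linarith [this.1, this.2]
  calc volume (ball x ρ) ≤ _ := measure_mono hsub
    _ = ENNReal.ofReal ((2*ρ) ^ d) := by
      rw [(EuclideanSpace.volume_preserving_symm_measurableEquiv_toLp (Fin d)).measure_preimage
        ((MeasurableSet.univ_pi fun i => measurableSet_Ioo).nullMeasurableSet),
        volume_pi_pi]
      have : ∀ i : Fin d, volume (Set.Ioo (x i - ρ) (x i + ρ)) = ENNReal.ofReal (2 * ρ) := by
        intro i; rw [Real.volume_Ioo]; congr 1; ring
      rw [Finset.prod_congr rfl (fun i _ => this i), Finset.prod_const,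
        ← ENNReal.ofReal_pow (by linarith)]
      simp

/-! ### The neighbourhood predicate and sets -/

def Pred (d : ℕ) (E : Set (EuclideanSpace ℝ (Fin d))) (n : ℕ) (c : Fin d → ℤ) : Prop :=
  ∃ z ∈ E, ∃ w ∈ cube d n c, dist z w ≤ 4 * ((2:ℝ) ^ n)⁻¹

def Sset (d : ℕ) (E : Set (EuclideanSpace ℝ (Fin d))) (n : ℕ) :
    Set (EuclideanSpace ℝ (Fin d)) :=
  {y | Pred d E n (idx d n y)}

lemma mem_Sset_iff {d n : ℕ} {E : Set (EuclideanSpace ℝ (Fin d))} {y : EuclideanSpace ℝ (Fin d)} :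
    y ∈ Sset d E n ↔ Pred d E n (idx d n y) := Iff.rfl

lemma Sset_anti {d : ℕ} (E : Set (EuclideanSpace ℝ (Fin d))) (n m : ℕ) :
    Sset d E (n + m) ⊆ Sset d E n := by
  intro y hy
  obtain ⟨z, hz, w, hw, hd⟩ := hy
  refine ⟨z, hz, w, cube_subset_coarse y hw, hd.trans ?_⟩
  have h1 : ((2:ℝ) ^ (n + m))⁻¹ ≤ ((2:ℝ) ^ n)⁻¹ := by
    apply inv_anti₀ (by positivity)
    exact pow_le_pow_right₀ (by norm_num) (Nat.le_add_right n m)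
  linarith

/-- the multiplicity constant -/
noncomputable def multN (d : ℕ) : ℕ := 2 * (2 * ⌈Real.sqrt d⌉₊ + 7) + 1

lemma step_volume (d : ℕ) (E : Set (EuclideanSpace ℝ (Fin d))) (κ : ℝ) (hκ0 : 0 < κ)
    (hpor : ∀ z ∈ E, ∀ ρ : ℝ, 0 < ρ → ρ ≤ 1 → ∃ y ∈ ball z ρ, ball y (κ * ρ) ∩ E = ∅)
    (n m : ℕ) (hm : ((2:ℝ) ^ m)⁻¹ ≤ κ / (8 * (Real.sqrt d + 1)))
    (hn1 : ((2:ℝ) ^ n)⁻¹ ≤ 1)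
    (x : EuclideanSpace ℝ (Fin d)) (ρ ρ' : ℝ)
    (hgap : ρ' + (6 + 2 * Real.sqrt d) * ((2:ℝ) ^ n)⁻¹ ≤ ρ) :
    volume (Sset d E (n+m) ∩ ball x ρ') +
      volume (Sset d E (n+m) ∩ ball x ρ') *
        ENNReal.ofReal ((((2:ℝ) ^ m)⁻¹) ^ d / ((multN d : ℝ)) ^ d)
      ≤ volume (Sset d E n ∩ ball x ρ) := by
  have hsd0 : (0:ℝ) ≤ Real.sqrt d := Real.sqrt_nonneg d
  set sd := Real.sqrt d with hsd
  set ℓn : ℝ := ((2:ℝ) ^ n)⁻¹ with hℓn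
  set ℓm : ℝ := ((2:ℝ) ^ (n+m))⁻¹ with hℓm
  set lam : ℝ := ((2:ℝ) ^ m)⁻¹ with hlam
  have hℓn_pos : 0 < ℓn := by positivity
  have hℓm_pos : 0 < ℓm := by positivity
  have hlam_pos : 0 < lam := by positivity
  have hlam_le1 : lam ≤ 1 := by
    rw [hlam]; exact inv_le_one_of_one_le₀ (one_le_pow₀ (by norm_num))
  have hℓm_eq : ℓm = lam * ℓn := by
    rw [hℓm, hlam, hℓn, pow_add, mul_inv, mul_comm]
  have hℓm_le : ℓm ≤ ℓn := by
    rw [hℓm_eq]; nlinarith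
  have hlamsd : lam * (sd + 4) ≤ κ / 2 := by
    have h1 : lam * (sd + 4) ≤ (κ / (8 * (sd + 1))) * (sd + 4) := by
      apply mul_le_mul_of_nonneg_right hm (by linarith)
    have h2 : (κ / (8 * (sd + 1))) * (sd + 4) ≤ κ / 2 := by
      rw [div_mul_eq_mul_div, div_le_div_iff₀ (by positivity) (by norm_num)]
      nlinarith
    linarith
  -- the finite set of relevant coarse cubes
  have hMfin : {c : Fin d → ℤ | Pred d E n c ∧ (cube d n c ∩ ball x ρ').Nonempty}.Finite :=
    (finite_cubes_meeting_ball d n x ρ').subset (fun c hc => hc.2)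
  set M : Finset (Fin d → ℤ) := hMfin.toFinset with hM
  have hmemM : ∀ c, c ∈ M ↔ Pred d E n c ∧ (cube d n c ∩ ball x ρ').Nonempty := by
    intro c; rw [hM, Set.Finite.mem_toFinset]; rfl
  -- witness cubes
  have hwit : ∀ c ∈ M, ∃ b : Fin d → ℤ,
      (cube d (n+m) b ⊆ Sset d E n) ∧ (cube d (n+m) b ⊆ ball x ρ) ∧
      ¬ Pred d E (n+m) b ∧
      ∃ w ∈ cube d (n+m) b, ∃ q ∈ cube d n c, dist w q ≤ (sd + 5) * ℓn := by
    intro c hc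
    obtain ⟨⟨z, hzE, q, hqc, hzq⟩, p0, hp0c, hp0b⟩ := (hmemM c).1 hc
    obtain ⟨y0, hy0, hhole⟩ := hpor z hzE ℓn hℓn_pos hn1
    have hy0z : dist y0 z < ℓn := mem_ball.1 hy0
    refine ⟨idx d (n+m) y0, ?_, ?_, ?_, ?_⟩
    · -- witness cube inside Sset n
      intro w hw
      have hidx : idx d n w = idx d n y0 := idx_coarse (mem_cube_iff.1 hw)
      show Pred d E n (idx d n w)
      rw [hidx]
      exact ⟨z, hzE, y0, mem_cube_idx y0, by
        rw [dist_comm]; linarith⟩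
    · -- witness cube inside the bigger ball
      intro w hw
      have h1 : dist w y0 ≤ sd * ℓm := dist_le_of_mem_cube hw (mem_cube_idx y0)
      have h2 : dist q p0 ≤ sd * ℓn := dist_le_of_mem_cube hqc hp0c
      have h3 : dist p0 x < ρ' := mem_ball.1 hp0b
      have hzq' : dist z q ≤ 4 * ℓn := hzq
      have : dist w x ≤ dist w y0 + dist y0 z + dist z q + dist q p0 + dist p0 x := by
        calc dist w x ≤ dist w y0 + dist y0 x := dist_triangle _ _ _
          _ ≤ dist w y0 + (dist y0 z + dist z x) := by linarith [dist_triangle y0 z x]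
          _ ≤ dist w y0 + (dist y0 z + (dist z q + dist q x)) := by
              linarith [dist_triangle z q x]
          _ ≤ _ := by linarith [dist_triangle q p0 x]
      have hsdlm : sd * ℓm ≤ sd * ℓn := by nlinarith
      apply mem_ball.2
      calc dist w x ≤ dist w y0 + dist y0 z + dist z q + dist q p0 + dist p0 x := this
        _ < sd * ℓn + ℓn + 4 * ℓn + sd * ℓn + ρ' := by linarith
        _ ≤ ρ := by nlinarith
    · -- witness cube has no nearby E points
      rintro ⟨z', hz'E, w', hw', hd'⟩
      have h1 : dist w' y0 ≤ sd * ℓm := dist_le_of_mem_cube hw' (mem_cube_idx y0)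
      have h2 : dist z' y0 ≤ 4 * ℓm + sd * ℓm := by
        calc dist z' y0 ≤ dist z' w' + dist w' y0 := dist_triangle _ _ _
          _ ≤ 4 * ℓm + sd * ℓm := by linarith
      have h3 : dist z' y0 < κ * ℓn := by
        have : 4 * ℓm + sd * ℓm = lam * (sd + 4) * ℓn := by rw [hℓm_eq]; ring
        rw [this] at h2
        have : lam * (sd + 4) * ℓn ≤ (κ/2) * ℓn := by nlinarith
        nlinarith
      have : z' ∈ ball y0 (κ * ℓn) ∩ E := ⟨mem_ball.2 h3, hz'E⟩
      rw [hhole] at this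
      exact this
    · -- witness point data
      refine ⟨y0, mem_cube_idx y0, q, hqc, ?_⟩
      calc dist y0 q ≤ dist y0 z + dist z q := dist_triangle _ _ _
        _ ≤ ℓn + 4 * ℓn := by linarith
        _ ≤ (sd + 5) * ℓn := by nlinarith
  choose! wit hw1 hw2 hw3 hw4 using hwit
  set I : Finset (Fin d → ℤ) := M.image wit with hI
  set A : Set (EuclideanSpace ℝ (Fin d)) := Sset d E (n+m) ∩ ball x ρ' with hA
  set U : Set (EuclideanSpace ℝ (Fin d)) := ⋃ b ∈ I, cube d (n+m) b with hU
  -- disjointness of A and U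
  have hdisj : Disjoint A U := by
    rw [Set.disjoint_left]
    rintro y ⟨hyS, _⟩ hyU
    simp only [hU, Set.mem_iUnion, exists_prop] at hyU
    obtain ⟨b, hbI, hyb⟩ := hyU
    obtain ⟨c, hcM, rfl⟩ := Finset.mem_image.1 hbI
    exact hw3 c hcM (by rw [← mem_cube_iff.1 hyb]; exact hyS)
  have hUmeas : MeasurableSet U := by
    exact (I : Finset _).measurableSet_biUnion (fun b _ => measurableSet_cube d (n+m) b)
  have hUsub : U ⊆ Sset d E n ∩ ball x ρ := by
    rw [hU]
    apply Set.iUnion₂_subset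
    intro b hbI
    obtain ⟨c, hcM, rfl⟩ := Finset.mem_image.1 hbI
    exact Set.subset_inter (hw1 c hcM) (hw2 c hcM)
  have hAsub : A ⊆ Sset d E n ∩ ball x ρ := by
    apply Set.inter_subset_inter (Sset_anti E n m)
    apply ball_subset_ball
    nlinarith
  have hle1 : volume A + volume U ≤ volume (Sset d E n ∩ ball x ρ) := by
    rw [← measure_union hdisj hUmeas]
    exact measure_mono (Set.union_subset hAsub hUsub)
  -- volume of U
  have hvolU : volume U = I.card * (ENNReal.ofReal ℓm) ^ d := by
    rw [hU, measure_biUnion_finset ?_ (fun b _ => measurableSet_cube d (n+m) b)]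
    · rw [Finset.sum_congr rfl (fun b _ => volume_cube d (n+m) b), Finset.sum_const,
        nsmul_eq_mul]
    · intro b hb b' hb' hne
      exact cube_disjoint hne
  -- A is covered by the cubes of M
  have hAcov : volume A ≤ M.card * (ENNReal.ofReal ℓn) ^ d := by
    have hsub : A ⊆ ⋃ c ∈ M, cube d n c := by
      rintro y ⟨hyS, hyb⟩
      have hyS' : y ∈ Sset d E n := Sset_anti E n m hyS
      have : idx d n y ∈ M := (hmemM _).2 ⟨hyS', ⟨y, mem_cube_idx y, hyb⟩⟩
      exact Set.mem_biUnion this (mem_cube_idx y)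
    calc volume A ≤ volume (⋃ c ∈ M, cube d n c) := measure_mono hsub
      _ ≤ ∑ c ∈ M, volume (cube d n c) := measure_biUnion_finset_le M _
      _ = M.card * (ENNReal.ofReal ℓn) ^ d := by
          rw [Finset.sum_congr rfl (fun c _ => volume_cube d n c), Finset.sum_const,
            nsmul_eq_mul]
  -- multiplicity bound
  have hcard : M.card ≤ (multN d) ^ d * I.card := by
    apply Finset.card_le_mul_card_image
    intro b hbI
    obtain ⟨c1, hc1M, hc1⟩ := Finset.mem_image.1 hbI
    obtain ⟨w1, hw1b, q1, hq1, hd1⟩ := hw4 c1 hc1M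
    rw [hc1] at hw1b
    set Ni : ℕ := 2 * ⌈Real.sqrt d⌉₊ + 7 with hNi
    set aref : Fin d → ℤ := idx d n w1 with haref
    have hNisd : (2*sd + 6 : ℝ) ≤ (Ni : ℝ) := by
      have : sd ≤ (⌈Real.sqrt d⌉₊ : ℝ) := Nat.le_ceil _
      rw [hNi]; push_cast; linarith
    have hsubI : M.filter (fun c => wit c = b) ⊆
        Finset.Icc (fun i => aref i - (Ni:ℤ)) (fun i => aref i + (Ni:ℤ)) := by
      intro c hc
      obtain ⟨hcM, hcb⟩ := Finset.mem_filter.1 hc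
      obtain ⟨w, hwb, q, hqc, hdq⟩ := hw4 c hcM
      rw [hcb] at hwb
      have hww1 : dist w w1 ≤ sd * ℓm := dist_le_of_mem_cube hwb hw1b
      have hqw1 : dist q w1 ≤ (2*sd + 5) * ℓn := by
        calc dist q w1 ≤ dist q w + dist w w1 := dist_triangle _ _ _
          _ ≤ (sd + 5) * ℓn + sd * ℓm := by rw [dist_comm q w]; linarith
          _ ≤ (2*sd + 5) * ℓn := by nlinarith
      have hidxq : idx d n q = c := mem_cube_iff.1 hqc
      rw [Finset.mem_Icc]
      have hkey : ∀ i, aref i - (Ni:ℤ) ≤ c i ∧ c i ≤ aref i + (Ni:ℤ) := by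
        intro i
        have hco : |q i - w1 i| ≤ (2*sd+5) * ℓn := by
          rw [← Real.dist_eq]
          exact (coord_dist_le q w1 i).trans hqw1
        have h2n_pos : (0:ℝ) < 2^n := by positivity
        have hscaled : |2^n * q i - 2^n * w1 i| ≤ 2*sd+5 := by
          rw [← mul_sub, abs_mul, abs_of_pos h2n_pos]
          calc (2:ℝ)^n * |q i - w1 i| ≤ 2^n * ((2*sd+5) * ℓn) :=
                mul_le_mul_of_nonneg_left hco h2n_pos.le
            _ = 2*sd+5 := by
                rw [hℓn]; field_simp
        rw [abs_le] at hscaled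
        have hcifl : c i = ⌊(2:ℝ)^n * q i⌋ := by rw [← hidxq]; rfl
        have harefl : aref i = ⌊(2:ℝ)^n * w1 i⌋ := rfl
        constructor
        · -- aref i - Ni ≤ c i
          have : (aref i : ℝ) ≤ 2^n * w1 i := by rw [harefl]; exact Int.floor_le _
          have h5 : (aref i : ℝ) ≤ 2^n * q i + (2*sd+5) := by linarith
          have h6 : (2:ℝ)^n * q i < c i + 1 := by
            rw [hcifl]; exact Int.lt_floor_add_one _
          have h7 : (aref i : ℝ) < (c i : ℝ) + 1 + (2*sd+5) := by linarith
          have h8 : (aref i : ℝ) < (c i : ℝ) + (Ni : ℝ) := by linarith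
          have h9 : aref i < c i + (Ni : ℤ) := by exact_mod_cast h8
          linarith
        · have : (c i : ℝ) ≤ 2^n * q i := by rw [hcifl]; exact Int.floor_le _
          have h5 : (c i : ℝ) ≤ 2^n * w1 i + (2*sd+5) := by linarith
          have h6 : (2:ℝ)^n * w1 i < aref i + 1 := by
            rw [harefl]; exact Int.lt_floor_add_one _
          have h8 : (c i : ℝ) < (aref i : ℝ) + (Ni : ℝ) := by linarith
          have h9 : c i < aref i + (Ni : ℤ) := by exact_mod_cast h8
          linarith
      exact ⟨fun i => (hkey i).1, fun i => (hkey i).2⟩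
    calc (M.filter (fun c => wit c = b)).card ≤ _ := Finset.card_le_card hsubI
      _ = (multN d) ^ d := by
        rw [Pi.card_Icc]
        have : ∀ i : Fin d, (Finset.Icc (aref i - (Ni:ℤ)) (aref i + (Ni:ℤ))).card
            = multN d := by
          intro i
          rw [Int.card_Icc]
          have : aref i + (Ni:ℤ) + 1 - (aref i - (Ni:ℤ)) = (2 * Ni + 1 : ℤ) := by ring
          rw [this]
          simp only [multN, hNi]
          omega
        rw [Finset.prod_congr rfl (fun i _ => this i), Finset.prod_const]
        simp
  -- put everything together
  have hmultR_pos : (0:ℝ) < ((multN d : ℝ)) ^ d := by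
    have : (0:ℝ) < (multN d : ℝ) := by
      simp only [multN]; positivity
    positivity
  have hkey : volume A * ENNReal.ofReal (lam ^ d) ≤
      ENNReal.ofReal (((multN d : ℝ)) ^ d) * volume U := by
    have e1 : (ENNReal.ofReal ℓn) ^ d * ENNReal.ofReal (lam ^ d) = (ENNReal.ofReal ℓm) ^ d := by
      rw [ENNReal.ofReal_pow hlam_pos.le, ← mul_pow, ← ENNReal.ofReal_mul hℓn_pos.le,
        hℓm_eq, mul_comm lam ℓn]
    calc volume A * ENNReal.ofReal (lam ^ d)
        ≤ (M.card * (ENNReal.ofReal ℓn) ^ d) * ENNReal.ofReal (lam ^ d) :=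
          mul_le_mul_left hAcov _
      _ = M.card * (ENNReal.ofReal ℓm) ^ d := by rw [mul_assoc, e1]
      _ ≤ ((multN d) ^ d * I.card : ℕ) * (ENNReal.ofReal ℓm) ^ d := by
          apply mul_le_mul_left
          exact_mod_cast Nat.cast_le.2 hcard
      _ = ENNReal.ofReal (((multN d : ℝ)) ^ d) * (I.card * (ENNReal.ofReal ℓm) ^ d) := by
          push_cast
          rw [ENNReal.ofReal_pow (by positivity), ENNReal.ofReal_natCast]
          ring
      _ = ENNReal.ofReal (((multN d : ℝ)) ^ d) * volume U := by rw [hvolU]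
  have hfinal : volume A * ENNReal.ofReal (lam ^ d / ((multN d : ℝ)) ^ d) ≤ volume U := by
    have e2 : ENNReal.ofReal (lam ^ d) =
        ENNReal.ofReal (((multN d : ℝ)) ^ d) * ENNReal.ofReal (lam ^ d / ((multN d : ℝ)) ^ d) := by
      rw [← ENNReal.ofReal_mul hmultR_pos.le]
      congr 1
      field_simp
    have e3 := hkey
    rw [e2] at e3
    have hne : ENNReal.ofReal (((multN d : ℝ)) ^ d) ≠ 0 := by
      exact (ENNReal.ofReal_pos.2 hmultR_pos).ne'
    have hnetop : ENNReal.ofReal (((multN d : ℝ)) ^ d) ≠ ⊤ := ENNReal.ofReal_ne_top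
    rw [show volume A * (ENNReal.ofReal (((multN d : ℝ)) ^ d) *
        ENNReal.ofReal (lam ^ d / ((multN d : ℝ)) ^ d)) =
        ENNReal.ofReal (((multN d : ℝ)) ^ d) *
        (volume A * ENNReal.ofReal (lam ^ d / ((multN d : ℝ)) ^ d)) by ring] at e3
    rwa [ENNReal.mul_le_mul_iff_right hne hnetop] at e3
  calc volume A + volume A * ENNReal.ofReal (lam ^ d / ((multN d : ℝ)) ^ d)
      ≤ volume A + volume U := add_le_add_right hfinal _
    _ ≤ volume (Sset d E n ∩ ball x ρ) := hle1

lemma exists_scale {x : ℝ} (h0 : 0 < x) (h1 : x ≤ 1) :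
    ∃ n : ℕ, ((2:ℝ) ^ n)⁻¹ ≤ x ∧ x ≤ 2 * ((2:ℝ) ^ n)⁻¹ := by
  have hhalf : ∀ j : ℕ, ((2:ℝ) ^ j)⁻¹ = (1/2) ^ j := by
    intro j; rw [one_div, inv_pow]
  obtain ⟨N, hN⟩ := exists_pow_lt_of_lt_one h0 (by norm_num : (1/2:ℝ) < 1)
  have hex : ∃ n : ℕ, ((2:ℝ) ^ n)⁻¹ ≤ x := ⟨N, by rw [hhalf]; exact hN.le⟩
  classical
  set n := Nat.find hex with hn
  have h2 : ((2:ℝ) ^ n)⁻¹ ≤ x := Nat.find_spec hex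
  refine ⟨n, h2, ?_⟩
  match hn' : n with
  | 0 => simp only [pow_zero, inv_one]; linarith
  | k+1 =>
    have h3 : ¬ ((2:ℝ) ^ k)⁻¹ ≤ x := Nat.find_min hex (by omega)
    push_neg at h3
    have : ((2:ℝ) ^ k)⁻¹ = 2 * ((2:ℝ) ^ (k+1))⁻¹ := by
      rw [pow_succ]
      field_simp
    linarith

lemma volume_decay (d : ℕ) (E : Set (EuclideanSpace ℝ (Fin d))) (κ : ℝ)
    (hκ0 : 0 < κ) (hκ1 : κ ≤ 1)
    (hpor : ∀ z ∈ E, ∀ ρ : ℝ, 0 < ρ → ρ ≤ 1 → ∃ y ∈ ball z ρ, ball y (κ * ρ) ∩ E = ∅) :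
    ∃ lam β c0 : ℝ, (0 < lam ∧ lam ≤ 1/2) ∧ (0 < β ∧ β < 1) ∧ (0 < c0 ∧ c0 ≤ 1) ∧
      ∀ x ∈ E, ∀ r : ℝ, 0 < r → r ≤ 1 → ∀ k : ℕ,
        volume {y | y ∈ ball x r ∧ EMetric.infEdist y E ≤ ENNReal.ofReal (c0 * lam ^ k * r)}
          ≤ ENNReal.ofReal ((4 * r) ^ d) * ENNReal.ofReal β ^ k := by
  have hsd0 : (0:ℝ) ≤ Real.sqrt d := Real.sqrt_nonneg d
  set sd := Real.sqrt d with hsd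
  have hden : (0:ℝ) < κ / (8 * (sd + 1)) := by positivity
  obtain ⟨m, hm'⟩ := exists_pow_lt_of_lt_one hden (by norm_num : (1/2:ℝ) < 1)
  set lam : ℝ := ((2:ℝ) ^ m)⁻¹ with hlam
  have hmlt : lam ≤ κ / (8 * (sd + 1)) := by
    rw [hlam, show ((2:ℝ)^m)⁻¹ = (1/2)^m by rw [one_div, inv_pow]]
    exact hm'.le
  have hlam_pos : 0 < lam := by positivity
  have hlam_half : lam ≤ 1/2 := by
    have h8 : κ / (8 * (sd + 1)) ≤ 1/2 := by
      rw [div_le_div_iff₀ (by positivity) (by norm_num)]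
      nlinarith
    linarith
  have hmultR_pos : (0:ℝ) < ((multN d : ℝ)) ^ d := by
    have : (0:ℝ) < (multN d : ℝ) := by simp only [multN]; positivity
    positivity
  set a : ℝ := lam ^ d / ((multN d : ℝ)) ^ d with ha
  have ha_pos : 0 < a := by positivity
  set β : ℝ := 1 / (1 + a) with hβdef
  have hβ_pos : 0 < β := by positivity
  have hβ_lt1 : β < 1 := by
    rw [hβdef, div_lt_one (by positivity)]; linarith
  set cd : ℝ := 12 + 4 * sd with hcd
  have hcd12 : (12:ℝ) ≤ cd := by rw [hcd]; linarith
  set c0 : ℝ := 3 / (2 * cd) with hc0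
  have hc0_pos : 0 < c0 := by positivity
  have hc0_le1 : c0 ≤ 1 := by
    rw [hc0, div_le_one (by positivity)]; linarith
  refine ⟨lam, β, c0, ⟨hlam_pos, hlam_half⟩, ⟨hβ_pos, hβ_lt1⟩, ⟨hc0_pos, hc0_le1⟩, ?_⟩
  intro x hxE r hr0 hr1 k
  have hrcd0 : 0 < r / cd := by positivity
  have hrcd1 : r / cd ≤ 1 := by
    rw [div_le_one (by positivity)]; linarith
  obtain ⟨n0, hn0a, hn0b⟩ := exists_scale hrcd0 hrcd1
  set ℓ : ℕ → ℝ := fun j => ((2:ℝ) ^ (n0 + m * j))⁻¹ with hℓ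
  set rr : ℕ → ℝ := fun j => r + cd * ℓ j with hrr
  set V : ℕ → ENNReal := fun j => volume (Sset d E (n0 + m * j) ∩ ball x (rr j)) with hV
  have hℓpos : ∀ j, 0 < ℓ j := fun j => by rw [hℓ]; positivity
  have hℓsucc : ∀ j, ℓ (j+1) = lam * ℓ j := by
    intro j
    simp only [hℓ, hlam]
    rw [show n0 + m * (j+1) = (n0 + m * j) + m by ring, pow_add, mul_inv, mul_comm]
  have hℓ0 : ℓ 0 ≤ r / cd := by simpa [hℓ] using hn0a
  have hℓ0' : r / cd ≤ 2 * ℓ 0 := by simpa [hℓ] using hn0b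
  have hℓle0 : ∀ j, ℓ j ≤ ℓ 0 := by
    intro j
    rw [hℓ]
    simp only
    apply inv_anti₀ (by positivity)
    apply pow_le_pow_right₀ (by norm_num)
    omega
  have hℓle1 : ∀ j, ℓ j ≤ 1 := by
    intro j
    have := (hℓle0 j).trans (hℓ0.trans hrcd1)
    linarith
  have hℓpow : ∀ j, ℓ j = lam ^ j * ℓ 0 := by
    intro j
    induction j with
    | zero => simp
    | succ i ih => rw [hℓsucc, ih, pow_succ]; ring
  -- the contraction step
  have hstep : ∀ j, V (j+1) + V (j+1) * ENNReal.ofReal a ≤ V j := by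
    intro j
    have heq : n0 + m * (j+1) = (n0 + m * j) + m := by ring
    have hgap : rr (j+1) + (6 + 2 * sd) * ℓ j ≤ rr j := by
      simp only [hrr]
      have h1 : ℓ (j+1) ≤ (1/2) * ℓ j := by
        rw [hℓsucc]
        nlinarith [hℓpos j]
      have : cd * ℓ (j+1) + (6 + 2*sd) * ℓ j ≤ cd * ℓ j := by
        rw [hcd]
        nlinarith [hℓpos j]
      linarith
    have := step_volume d E κ hκ0 hpor (n0 + m * j) m hmlt (hℓle1 j) x (rr j) (rr (j+1)) hgap
    rw [← heq] at this
    exact this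
  have hβstep : ∀ j, V (j+1) ≤ ENNReal.ofReal β * V j := by
    intro j
    have h1 : V (j+1) * (1 + ENNReal.ofReal a) ≤ V j := by
      rw [mul_add, mul_one]
      exact hstep j
    have h2 : (1 : ENNReal) + ENNReal.ofReal a = ENNReal.ofReal (1 + a) := by
      rw [ENNReal.ofReal_add (by norm_num) ha_pos.le, ENNReal.ofReal_one]
    have h3 : ENNReal.ofReal β * ENNReal.ofReal (1 + a) = 1 := by
      rw [← ENNReal.ofReal_mul hβ_pos.le, hβdef]
      rw [show 1 / (1+a) * (1+a) = 1 by field_simp]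
      exact ENNReal.ofReal_one
    calc V (j+1) = ENNReal.ofReal β * (V (j+1) * ENNReal.ofReal (1+a)) := by
          rw [show ENNReal.ofReal β * (V (j+1) * ENNReal.ofReal (1+a)) =
            (ENNReal.ofReal β * ENNReal.ofReal (1+a)) * V (j+1) by ring, h3, one_mul]
      _ ≤ ENNReal.ofReal β * V j := by
          apply mul_le_mul_right
          rw [h2] at h1
          exact h1
  have hiter : ∀ j, V j ≤ ENNReal.ofReal β ^ j * V 0 := by
    intro j
    induction j with
    | zero => simp
    | succ i ih =>
      calc V (i+1) ≤ ENNReal.ofReal β * V i := hβstep i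
        _ ≤ ENNReal.ofReal β * (ENNReal.ofReal β ^ i * V 0) := mul_le_mul_right ih _
        _ = ENNReal.ofReal β ^ (i+1) * V 0 := by rw [pow_succ]; ring
  have hV0 : V 0 ≤ ENNReal.ofReal ((4 * r) ^ d) := by
    have hrr0 : rr 0 ≤ 2 * r := by
      simp only [hrr]
      have h2 : ℓ 0 * cd ≤ r := (le_div_iff₀ (by positivity : (0:ℝ) < cd)).1 hℓ0
      nlinarith
    calc V 0 ≤ volume (ball x (rr 0)) := measure_mono Set.inter_subset_right
      _ ≤ ENNReal.ofReal ((2 * rr 0) ^ d) := volume_ball_le x (rr 0)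
      _ ≤ ENNReal.ofReal ((4 * r) ^ d) := by
          apply ENNReal.ofReal_le_ofReal
          apply pow_le_pow_left₀
          · have : 0 < rr 0 := by
              simp only [hrr]
              have := hℓpos 0
              nlinarith
            linarith
          · linarith
  have hincl : {y | y ∈ ball x r ∧ EMetric.infEdist y E ≤ ENNReal.ofReal (c0 * lam ^ k * r)}
      ⊆ Sset d E (n0 + m * k) ∩ ball x (rr k) := by
    rintro y ⟨hyb, hyE⟩
    constructor
    · rw [mem_Sset_iff]
      have hle : c0 * lam ^ k * r ≤ 3 * ℓ k := by
        have h1 : c0 * r ≤ 3 * ℓ 0 := by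
          have h2 : r ≤ 2 * ℓ 0 * cd := by
            have := (div_le_iff₀ (by positivity : (0:ℝ) < cd)).1 hℓ0'
            linarith
          rw [hc0, div_mul_eq_mul_div, div_le_iff₀ (by positivity)]
          nlinarith
        rw [hℓpow k]
        calc c0 * lam ^ k * r = lam ^ k * (c0 * r) := by ring
          _ ≤ lam ^ k * (3 * ℓ 0) := by
              apply mul_le_mul_of_nonneg_left h1 (by positivity)
          _ = 3 * (lam ^ k * ℓ 0) := by ring
      have hlt : EMetric.infEdist y E < ENNReal.ofReal (4 * ℓ k) := by
        calc EMetric.infEdist y E ≤ ENNReal.ofReal (c0 * lam ^ k * r) := hyE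
          _ ≤ ENNReal.ofReal (3 * ℓ k) := ENNReal.ofReal_le_ofReal hle
          _ < ENNReal.ofReal (4 * ℓ k) := by
              apply ENNReal.ofReal_lt_ofReal_iff_of_nonneg (by nlinarith [hℓpos k]) |>.2
              nlinarith [hℓpos k]
      obtain ⟨z, hzE, hzd⟩ := EMetric.infEdist_lt_iff.1 hlt
      have hzd' : dist y z < 4 * ℓ k := by
        rw [edist_dist] at hzd
        exact (ENNReal.ofReal_lt_ofReal_iff_of_nonneg dist_nonneg).1 hzd
      exact ⟨z, hzE, y, mem_cube_idx y, by
        rw [dist_comm]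
        simpa [hℓ] using hzd'.le⟩
    · apply ball_subset_ball ?_ hyb
      simp only [hrr]
      nlinarith [hℓpos k, hcd12]
  calc volume {y | y ∈ ball x r ∧ EMetric.infEdist y E ≤ ENNReal.ofReal (c0 * lam ^ k * r)}
      ≤ V k := measure_mono hincl
    _ ≤ ENNReal.ofReal β ^ k * V 0 := hiter k
    _ ≤ ENNReal.ofReal β ^ k * ENNReal.ofReal ((4*r) ^ d) := mul_le_mul_right hV0 _
    _ = ENNReal.ofReal ((4 * r) ^ d) * ENNReal.ofReal β ^ k := mul_comm _ _


end Porous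


open Porous

/-- An open set with porous boundary belongs to the class `D^t` for some `t ∈ (0,1)`:
the quantity `r^(t-d) ∫_{B(x,r) \ ∂O} dist(y,∂O)^(-t) dy` is uniformly bounded over
`x ∈ ∂O` and `0 < r ≤ 1`. -/
theorem porous_boundary_implies_Dt (d : ℕ) (O : Set (EuclideanSpace ℝ (Fin d)))
    (hO : IsOpen O) (κ : ℝ) (hκ0 : 0 < κ) (hκ1 : κ ≤ 1)
    (hpor : ∀ x ∈ frontier O, ∀ r : ℝ, 0 < r → r ≤ 1 →
      ∃ y ∈ ball x r, ball y (κ * r) ∩ frontier O = ∅) :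
    ∃ t : ℝ, 0 < t ∧ t < 1 ∧ ∃ K : ℝ, 0 ≤ K ∧
      ∀ x ∈ frontier O, ∀ r : ℝ, 0 < r → r ≤ 1 →
        ∫⁻ y in ball x r \ frontier O, EMetric.infEdist y (frontier O) ^ (-t) ≤
          ENNReal.ofReal (K * r ^ ((d : ℝ) - t)) := by
  classical
  set E := frontier O with hE
  obtain ⟨lam, β, c0, ⟨hlam0, hlam_half⟩, ⟨hβ0, hβ1⟩, ⟨hc00, hc01⟩, hdecay⟩ :=
    Porous.volume_decay d E κ hκ0 hκ1 hpor
  have hlam1 : lam < 1 := lt_of_le_of_lt hlam_half (by norm_num)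
  have hloglam : 0 < Real.log lam⁻¹ := by
    rw [Real.log_inv]; linarith [Real.log_neg hlam0 hlam1]
  have hlogβ : 0 < Real.log β⁻¹ := by
    rw [Real.log_inv]; linarith [Real.log_neg hβ0 hβ1]
  set t := min (1/2 : ℝ) (Real.log β⁻¹ / (2 * Real.log lam⁻¹)) with htdef
  have ht0 : 0 < t := lt_min (by norm_num) (by positivity)
  have ht1 : t < 1 := lt_of_le_of_lt (min_le_left _ _) (by norm_num)
  refine ⟨t, ht0, ht1, ?_⟩
  have hlamrpow_pos : 0 < lam ^ (-t) := Real.rpow_pos_of_pos hlam0 _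
  set g := β * lam ^ (-t) with hgdef
  have hg0 : 0 < g := by positivity
  have hg1 : g < 1 := by
    have hkey : t * Real.log lam⁻¹ ≤ (1/2) * Real.log β⁻¹ := by
      have h1 : t ≤ Real.log β⁻¹ / (2 * Real.log lam⁻¹) := min_le_right _ _
      rw [le_div_iff₀ (by positivity)] at h1
      nlinarith
    have hlam_rpow : lam ^ (-t) = Real.exp (t * Real.log lam⁻¹) := by
      rw [Real.rpow_def_of_pos hlam0, Real.log_inv]; ring_nf
    have hg_le : g ≤ Real.exp ((1/2) * Real.log β) := by
      rw [hgdef, hlam_rpow]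
      calc β * Real.exp (t * Real.log lam⁻¹)
          ≤ β * Real.exp ((1/2) * Real.log β⁻¹) := by
            apply mul_le_mul_of_nonneg_left (Real.exp_le_exp.2 hkey) hβ0.le
        _ = Real.exp (Real.log β + (1/2) * Real.log β⁻¹) := by
            rw [Real.exp_add, Real.exp_log hβ0]
        _ = Real.exp ((1/2) * Real.log β) := by
            rw [Real.log_inv]; ring_nf
    have : Real.exp ((1/2) * Real.log β) < 1 := by
      rw [Real.exp_lt_one_iff]
      have := Real.log_neg hβ0 hβ1
      linarith
    linarith
  have h1g : 0 < 1 - g := by linarith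
  set K : ℝ := c0 ^ (-t) * 2 ^ d + c0 ^ (-t) * lam ^ (-t) * 4 ^ d * (1 - g)⁻¹ with hKdef
  have hc0rpow_pos : 0 < c0 ^ (-t) := Real.rpow_pos_of_pos hc00 _
  have hK0 : 0 ≤ K := by
    apply add_nonneg
    · positivity
    · apply mul_nonneg (by positivity) (inv_nonneg.2 h1g.le)
  refine ⟨K, hK0, ?_⟩
  intro x hxE r hr0 hr1
  set P : ℝ := r ^ ((d:ℝ) - t) with hPdef
  have hPsplit : P = r ^ d * r ^ (-t) := by
    rw [hPdef, sub_eq_add_neg, Real.rpow_add hr0, Real.rpow_natCast]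
  have hrt_pos : 0 < r ^ (-t) := Real.rpow_pos_of_pos hr0 _
  -- the layers
  set A : ℕ → Set (EuclideanSpace ℝ (Fin d)) := fun j =>
    {y | y ∈ ball x r ∧ ENNReal.ofReal (c0 * lam ^ (j+1) * r) < EMetric.infEdist y E ∧
      EMetric.infEdist y E ≤ ENNReal.ofReal (c0 * lam ^ j * r)} with hAdef
  set Atop : Set (EuclideanSpace ℝ (Fin d)) :=
    {y | y ∈ ball x r ∧ ENNReal.ofReal (c0 * lam ^ 0 * r) < EMetric.infEdist y E} with hAtopdef
  set C : ℕ → Set (EuclideanSpace ℝ (Fin d)) := fun j =>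
    match j with
    | 0 => Atop
    | (i+1) => A i
    with hCdef
  have hC0 : C 0 = Atop := rfl
  have hCsucc : ∀ i, C (i+1) = A i := fun i => rfl
  -- covering
  have hcover : ball x r \ E ⊆ ⋃ j, C j := by
    rintro y ⟨hyb, hyE⟩
    have he0 : EMetric.infEdist y E ≠ 0 := by
      intro h0
      have : y ∈ closure E := EMetric.mem_closure_iff_infEdist_zero.2 h0
      rw [hE, isClosed_frontier.closure_eq] at this
      exact hyE this
    by_cases htopc : ENNReal.ofReal (c0 * lam ^ 0 * r) < EMetric.infEdist y E
    · exact Set.mem_iUnion.2 ⟨0, ⟨hyb, htopc⟩⟩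
    · push_neg at htopc
      have hetop : EMetric.infEdist y E ≠ ⊤ :=
        ne_top_of_le_ne_top ENNReal.ofReal_ne_top htopc
      have het0 : 0 < (EMetric.infEdist y E).toReal := ENNReal.toReal_pos he0 hetop
      have hex : ∃ j : ℕ, ENNReal.ofReal (c0 * lam ^ (j+1) * r) < EMetric.infEdist y E := by
        have hq : 0 < (EMetric.infEdist y E).toReal / (c0 * r) := by positivity
        obtain ⟨N, hN⟩ := exists_pow_lt_of_lt_one hq hlam1
        refine ⟨N, ?_⟩
        have h2 : c0 * lam ^ (N+1) * r < (EMetric.infEdist y E).toReal := by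
          rw [lt_div_iff₀ (by positivity)] at hN
          have h3 : lam ^ (N+1) ≤ lam ^ N := pow_le_pow_of_le_one hlam0.le hlam1.le (by omega)
          have h5 : lam ^ (N+1) * (c0 * r) ≤ lam ^ N * (c0 * r) :=
            mul_le_mul_of_nonneg_right h3 (by positivity)
          have h7 : c0 * lam ^ (N+1) * r = lam ^ (N+1) * (c0 * r) := by ring
          linarith
        calc ENNReal.ofReal (c0 * lam ^ (N+1) * r)
            < ENNReal.ofReal ((EMetric.infEdist y E).toReal) :=
              (ENNReal.ofReal_lt_ofReal_iff het0).2 h2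
          _ = EMetric.infEdist y E := ENNReal.ofReal_toReal hetop
      set j := Nat.find hex with hj
      have hlow : ENNReal.ofReal (c0 * lam ^ (j+1) * r) < EMetric.infEdist y E :=
        Nat.find_spec hex
      have hupp : EMetric.infEdist y E ≤ ENNReal.ofReal (c0 * lam ^ j * r) := by
        match hj' : j with
        | 0 => rw [← hj'] at htopc ⊢; exact htopc
        | i+1 =>
          have := Nat.find_min hex (show i < j by omega)
          push_neg at this
          exact this
      exact Set.mem_iUnion.2 ⟨j+1, ⟨hyb, hlow, hupp⟩⟩
  -- measurability
  have hmeasE : Measurable fun y : EuclideanSpace ℝ (Fin d) => EMetric.infEdist y E :=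
    EMetric.continuous_infEdist.measurable
  have hAmeas : ∀ j, MeasurableSet (A j) := by
    intro j
    have : A j = ball x r ∩ ({y | ENNReal.ofReal (c0 * lam ^ (j+1) * r) < EMetric.infEdist y E}
        ∩ {y | EMetric.infEdist y E ≤ ENNReal.ofReal (c0 * lam ^ j * r)}) := by
      ext y; simp only [hAdef, Set.mem_setOf_eq, Set.mem_inter_iff, and_assoc]
    rw [this]
    exact measurableSet_ball.inter ((measurableSet_lt measurable_const hmeasE).inter
      (measurableSet_le hmeasE measurable_const))
  have hAtopmeas : MeasurableSet Atop := by
    have : Atop = ball x r ∩ {y | ENNReal.ofReal (c0 * lam ^ 0 * r) < EMetric.infEdist y E} := by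
      ext y; simp only [hAtopdef, Set.mem_setOf_eq, Set.mem_inter_iff]
    rw [this]
    exact measurableSet_ball.inter (measurableSet_lt measurable_const hmeasE)
  -- antitonicity of negative powers
  have hanti : ∀ u v : ENNReal, u ≤ v → v ^ (-t) ≤ u ^ (-t) := by
    intro u v huv
    rw [ENNReal.rpow_neg, ENNReal.rpow_neg]
    exact ENNReal.inv_le_inv.2 (ENNReal.rpow_le_rpow huv ht0.le)
  -- bound on each layer
  have hterm : ∀ j : ℕ, ∫⁻ y in A j, EMetric.infEdist y E ^ (-t) ≤
      ENNReal.ofReal (c0 ^ (-t) * lam ^ (-t) * 4 ^ d * P) * ENNReal.ofReal g ^ j := by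
    intro j
    have hδpos : 0 < c0 * lam ^ (j+1) * r := by positivity
    have hptwise : ∀ y ∈ A j, EMetric.infEdist y E ^ (-t) ≤
        ENNReal.ofReal ((c0 * lam ^ (j+1) * r) ^ (-t)) := by
      intro y hy
      rw [← ENNReal.ofReal_rpow_of_pos hδpos]
      exact hanti _ _ hy.2.1.le
    have hvol : volume (A j) ≤ ENNReal.ofReal ((4 * r) ^ d) * ENNReal.ofReal β ^ j := by
      refine le_trans (measure_mono ?_) (hdecay x hxE r hr0 hr1 j)
      intro y hy
      exact ⟨hy.1, hy.2.2⟩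
    calc ∫⁻ y in A j, EMetric.infEdist y E ^ (-t)
        ≤ ∫⁻ _y in A j, ENNReal.ofReal ((c0 * lam ^ (j+1) * r) ^ (-t)) :=
          setLIntegral_mono' (hAmeas j) hptwise
      _ = ENNReal.ofReal ((c0 * lam ^ (j+1) * r) ^ (-t)) * volume (A j) := by
          rw [setLIntegral_const]
      _ ≤ ENNReal.ofReal ((c0 * lam ^ (j+1) * r) ^ (-t)) *
          (ENNReal.ofReal ((4 * r) ^ d) * ENNReal.ofReal β ^ j) := mul_le_mul_right hvol _
      _ = ENNReal.ofReal (c0 ^ (-t) * lam ^ (-t) * 4 ^ d * P) * ENNReal.ofReal g ^ j := by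
          rw [← ENNReal.ofReal_pow hβ0.le, ← ENNReal.ofReal_mul (by positivity),
            ← ENNReal.ofReal_mul (by positivity), ← ENNReal.ofReal_pow hg0.le,
            ← ENNReal.ofReal_mul (by positivity)]
          congr 1
          have hpowsplit : (c0 * lam ^ (j+1) * r) ^ (-t) =
              c0 ^ (-t) * (lam ^ (-t)) ^ (j+1) * r ^ (-t) := by
            rw [Real.mul_rpow (by positivity) hr0.le, Real.mul_rpow hc00.le (by positivity)]
            congr 1
            rw [← Real.rpow_natCast lam (j+1), ← Real.rpow_mul hlam0.le,
              mul_comm ((j+1 : ℕ) : ℝ) (-t), Real.rpow_mul hlam0.le, Real.rpow_natCast]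
          rw [hpowsplit, hPsplit, hgdef]
          rw [mul_pow, pow_succ, mul_pow]
          ring
  have htop : ∫⁻ y in Atop, EMetric.infEdist y E ^ (-t) ≤
      ENNReal.ofReal (c0 ^ (-t) * 2 ^ d * P) := by
    have hδpos : 0 < c0 * lam ^ 0 * r := by positivity
    have hptwise : ∀ y ∈ Atop, EMetric.infEdist y E ^ (-t) ≤
        ENNReal.ofReal ((c0 * lam ^ 0 * r) ^ (-t)) := by
      intro y hy
      rw [← ENNReal.ofReal_rpow_of_pos hδpos]
      exact hanti _ _ hy.2.le
    calc ∫⁻ y in Atop, EMetric.infEdist y E ^ (-t)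
        ≤ ∫⁻ _y in Atop, ENNReal.ofReal ((c0 * lam ^ 0 * r) ^ (-t)) :=
          setLIntegral_mono' hAtopmeas hptwise
      _ = ENNReal.ofReal ((c0 * lam ^ 0 * r) ^ (-t)) * volume Atop := by
          rw [setLIntegral_const]
      _ ≤ ENNReal.ofReal ((c0 * lam ^ 0 * r) ^ (-t)) * ENNReal.ofReal ((2 * r) ^ d) := by
          apply mul_le_mul_right
          exact le_trans (measure_mono (fun y hy => hy.1)) (Porous.volume_ball_le x r)
      _ = ENNReal.ofReal (c0 ^ (-t) * 2 ^ d * P) := by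
          rw [← ENNReal.ofReal_mul (by positivity)]
          congr 1
          rw [pow_zero, mul_one, Real.mul_rpow hc00.le hr0.le, hPsplit, mul_pow]
          ring
  -- assembling
  calc ∫⁻ y in ball x r \ E, EMetric.infEdist y E ^ (-t)
      ≤ ∫⁻ y in ⋃ j, C j, EMetric.infEdist y E ^ (-t) := lintegral_mono_set hcover
    _ ≤ ∑' j, ∫⁻ y in C j, EMetric.infEdist y E ^ (-t) := lintegral_iUnion_le _ _
    _ = (∫⁻ y in Atop, EMetric.infEdist y E ^ (-t)) +
        ∑' i, ∫⁻ y in A i, EMetric.infEdist y E ^ (-t) := by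
        rw [tsum_eq_zero_add' ENNReal.summable]
    _ ≤ ENNReal.ofReal (c0 ^ (-t) * 2 ^ d * P) +
        ∑' i, ENNReal.ofReal (c0 ^ (-t) * lam ^ (-t) * 4 ^ d * P) * ENNReal.ofReal g ^ i :=
        add_le_add htop (ENNReal.tsum_le_tsum hterm)
    _ = ENNReal.ofReal (c0 ^ (-t) * 2 ^ d * P) +
        ENNReal.ofReal (c0 ^ (-t) * lam ^ (-t) * 4 ^ d * P) * (1 - ENNReal.ofReal g)⁻¹ := by
        rw [ENNReal.tsum_mul_left, ENNReal.tsum_geometric]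
    _ = ENNReal.ofReal (K * P) := by
        have e1 : (1 : ENNReal) - ENNReal.ofReal g = ENNReal.ofReal (1 - g) := by
          rw [ENNReal.ofReal_sub 1 hg0.le, ENNReal.ofReal_one]
        rw [e1, ← ENNReal.ofReal_inv_of_pos h1g,
          ← ENNReal.ofReal_mul (by positivity),
          ← ENNReal.ofReal_add (by positivity) (by
            apply mul_nonneg (by positivity) (inv_nonneg.2 h1g.le)),
          hKdef]
        congr 1
        ring
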